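/- arXiv:2306.14311 — 3 statements merged into one kernel-verified Lean document; each statement's English description precedes it below -/
import Mathlib

section
/- Let g : ℝ → ℝ be K-times continuously differentiable and suppose there exist constants b₁, b₂ ≥ 0 and an integer M ≥ K+1 such that |g^{(K)}(x') − g^{(K)}(x)| ≤ b₁|x'−x| + b₂|x'−x|^{M−K} for all x, x'. Let X* and ε be independent real random variables with E[ε] = 0 and all moments E[|ε|^m], m ≤ M, finite, and suppose E[|g^{(k)}(X*)|] < ∞ for k = 0,...,K. Then |E[g(X*+ε)] − E[g(X*)] − Σ_{k=2}^{K} (E[εᵏ]/k!)·E[g^{(k)}(X*)]| ≤ (b₁/K!)·E[|ε|^{K+1}] + (b₂/K!)·E[|ε|^{M}]. -/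
open MeasureTheory ProbabilityTheory
open scoped BigOperators

lemma idw_eq {g : ℝ → ℝ} {K : ℕ} (hg : ContDiff ℝ K g) {k : ℕ} (hk : k ≤ K)
    {s : Set ℝ} (hs : UniqueDiffOn ℝ s) {x : ℝ} (hx : x ∈ s) :
    iteratedDerivWithin k g s x = iteratedDeriv k g x := by
  rw [iteratedDerivWithin_eq_iteratedFDerivWithin, iteratedDeriv_eq_iteratedFDeriv]
  congr 1
  exact (((contDiff_iff_ftaylorSeries.mp hg).hasFTaylorSeriesUpToOn
    s).eq_iteratedFDerivWithin_of_uniqueDiffOn (by exact_mod_cast hk) hs hx).symm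

lemma taylor_pos {g : ℝ → ℝ} {K : ℕ} (hK : 1 ≤ K) (hg : ContDiff ℝ K g) (x e : ℝ)
    (he : 0 < e) :
    ∃ x', |x' - x| ≤ |e| ∧
      g (x + e) - ∑ k ∈ Finset.range (K + 1),
          iteratedDeriv k g x * e ^ k / (Nat.factorial k : ℝ)
        = (iteratedDeriv K g x' - iteratedDeriv K g x) * e ^ K / (Nat.factorial K : ℝ) := by
  have hx : x < x + e := by linarith
  have hud : UniqueDiffOn ℝ (Set.Icc x (x + e)) := uniqueDiffOn_Icc hx
  obtain ⟨K, rfl⟩ : ∃ n, K = n + 1 := ⟨K - 1, (Nat.succ_pred_eq_of_pos hK).symm⟩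
  have hco : ContDiffOn ℝ K g (Set.Icc x (x + e)) :=
    (hg.of_le (by exact_mod_cast Nat.le_succ K)).contDiffOn
  have hdiff : DifferentiableOn ℝ (iteratedDerivWithin K g (Set.Icc x (x + e)))
      (Set.Ioo x (x + e)) := by
    have : Differentiable ℝ (iteratedDeriv K g) :=
      hg.differentiable_iteratedDeriv K (by exact_mod_cast Nat.lt_succ_self K)
    refine (this.differentiableOn).congr fun y hy => ?_
    exact idw_eq hg (Nat.le_succ K) hud (Set.Ioo_subset_Icc_self hy)
  obtain ⟨x', hx', heq⟩ := taylor_mean_remainder_lagrange hx.ne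
    (by rwa [Set.uIcc_of_le hx.le]) (by rwa [Set.uIcc_of_le hx.le, Set.uIoo_of_le hx.le])
  rw [Set.uIcc_of_le hx.le] at heq
  rw [Set.uIoo_of_le hx.le] at hx'
  have hsum : ∀ k ∈ Finset.range (K + 1),
      ((Nat.factorial k : ℝ)⁻¹ * (x + e - x) ^ k) • iteratedDerivWithin k g
        (Set.Icc x (x + e)) x
      = iteratedDeriv k g x * e ^ k / (Nat.factorial k : ℝ) := by
    intro k hk
    rw [idw_eq hg ((Nat.lt_succ_iff.mp (Finset.mem_range.mp hk)).trans (Nat.le_succ K)) hud (Set.left_mem_Icc.mpr hx.le), smul_eq_mul,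
      add_sub_cancel_left]
    ring
  rw [taylor_within_apply, Finset.sum_congr rfl hsum,
    idw_eq hg le_rfl hud (Set.Ioo_subset_Icc_self hx'), add_sub_cancel_left] at heq
  refine ⟨x', ?_, ?_⟩
  · rw [abs_of_pos he, abs_le]
    constructor
    · linarith [hx'.1]
    · linarith [hx'.2]
  · rw [Finset.sum_range_succ, sub_add_eq_sub_sub, heq]
    ring

lemma taylor_exists {g : ℝ → ℝ} {K : ℕ} (hK : 1 ≤ K) (hg : ContDiff ℝ K g) (x e : ℝ)
    (he : e ≠ 0) :
    ∃ x', |x' - x| ≤ |e| ∧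
      g (x + e) - ∑ k ∈ Finset.range (K + 1),
          iteratedDeriv k g x * e ^ k / (Nat.factorial k : ℝ)
        = (iteratedDeriv K g x' - iteratedDeriv K g x) * e ^ K / (Nat.factorial K : ℝ) := by
  rcases lt_or_gt_of_ne he with hneg | hpos
  · -- e < 0 : reflect
    set g2 : ℝ → ℝ := fun y => g (-y) with hg2
    have hgc : ContDiff ℝ K g2 := hg.comp contDiff_neg
    have hid : ∀ (k : ℕ) (y : ℝ), iteratedDeriv k g2 y = (-1 : ℝ) ^ k * iteratedDeriv k g (-y) := by
      intro k y
      simpa [smul_eq_mul] using iteratedDeriv_comp_neg k g y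
    obtain ⟨y', hy', heq⟩ := taylor_pos hK hgc (-x) (-e) (by linarith)
    refine ⟨-y', ?_, ?_⟩
    · have : |-y' - x| = |y' - -x| := by rw [← abs_neg]; ring_nf
      rw [this, ← abs_neg e]
      exact hy'
    · have h1 : g2 (-x + -e) = g (x + e) := by simp [hg2]; ring_nf
      have h2 : ∀ k ∈ Finset.range (K + 1),
          iteratedDeriv k g2 (-x) * (-e) ^ k / (Nat.factorial k : ℝ)
          = iteratedDeriv k g x * e ^ k / (Nat.factorial k : ℝ) := by
        intro k _
        rw [hid k (-x), neg_neg, neg_pow e]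
        ring_nf
        simp [pow_mul', neg_one_sq]
      rw [h1, Finset.sum_congr rfl h2, hid K y', hid K (-x), neg_neg, neg_pow e] at heq
      rw [heq]
      ring_nf
      simp [pow_mul', neg_one_sq]
  · exact taylor_pos hK hg x e hpos

lemma taylor_abs_bound {g : ℝ → ℝ} {K M : ℕ} (hK : 1 ≤ K) (hM : K + 1 ≤ M)
    {b₁ b₂ : ℝ} (hb₁ : 0 ≤ b₁) (hb₂ : 0 ≤ b₂) (hg : ContDiff ℝ K g)
    (hlip : ∀ x x' : ℝ, |iteratedDeriv K g x' - iteratedDeriv K g x|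
        ≤ b₁ * |x' - x| + b₂ * |x' - x| ^ (M - K))
    (x e : ℝ) :
    |g (x + e) - ∑ k ∈ Finset.range (K + 1),
        iteratedDeriv k g x * e ^ k / (Nat.factorial k : ℝ)|
      ≤ b₁ / (Nat.factorial K : ℝ) * |e| ^ (K + 1)
        + b₂ / (Nat.factorial K : ℝ) * |e| ^ M := by
  have hKfac : (0:ℝ) < (Nat.factorial K : ℝ) := by positivity
  rcases eq_or_ne e 0 with rfl | he
  · have hsum : ∑ k ∈ Finset.range (K + 1),
        iteratedDeriv k g x * (0:ℝ) ^ k / (Nat.factorial k : ℝ) = g x := by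
      rw [Finset.sum_eq_single_of_mem 0 (Finset.mem_range.mpr (Nat.succ_pos K))]
      · simp
      · intro k _ hk
        simp [zero_pow hk]
    simp only [add_zero, hsum, sub_self, abs_zero]
    positivity
  · obtain ⟨x', hx', heq⟩ := taylor_exists hK hg x e he
    rw [heq, abs_div, abs_mul, abs_pow, abs_of_pos hKfac]
    have hA : |iteratedDeriv K g x' - iteratedDeriv K g x|
        ≤ b₁ * |e| + b₂ * |e| ^ (M - K) := by
      refine (hlip x x').trans ?_
      gcongr
    have hmono : (0:ℝ) ≤ |e| ^ K := by positivity
    calc |iteratedDeriv K g x' - iteratedDeriv K g x| * |e| ^ K / (Nat.factorial K : ℝ)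
        ≤ (b₁ * |e| + b₂ * |e| ^ (M - K)) * |e| ^ K / (Nat.factorial K : ℝ) := by
          gcongr
      _ = b₁ / (Nat.factorial K : ℝ) * |e| ^ (K + 1)
          + b₂ / (Nat.factorial K : ℝ) * (|e| ^ (M - K) * |e| ^ K) := by ring
      _ = _ := by
          rw [← pow_add, Nat.sub_add_cancel (by omega : K ≤ M)]

theorem Kth_order_expansion_bound
    {Ω : Type*} [MeasurableSpace Ω] (μ : Measure Ω) [IsProbabilityMeasure μ]
    (K M : ℕ) (hK : 2 ≤ K) (hM : K + 1 ≤ M)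
    (g : ℝ → ℝ) (b₁ b₂ : ℝ) (hb₁ : 0 ≤ b₁) (hb₂ : 0 ≤ b₂)
    (hg : ContDiff ℝ K g)
    (hlip : ∀ x x' : ℝ, |iteratedDeriv K g x' - iteratedDeriv K g x|
        ≤ b₁ * |x' - x| + b₂ * |x' - x| ^ (M - K))
    (Xs ε : Ω → ℝ) (hXs : Measurable Xs) (hε : Measurable ε)
    (hindep : IndepFun Xs ε μ)
    (hmean : ∫ ω, ε ω ∂μ = 0)
    (hmom : ∀ m ≤ M, Integrable (fun ω => |ε ω| ^ m) μ)
    (hgk : ∀ k ≤ K, Integrable (fun ω => iteratedDeriv k g (Xs ω)) μ)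
    (hgXe : Integrable (fun ω => g (Xs ω + ε ω)) μ) :
    |(∫ ω, g (Xs ω + ε ω) ∂μ) - (∫ ω, g (Xs ω) ∂μ)
        - ∑ k ∈ Finset.Icc 2 K,
            (∫ ω, ε ω ^ k ∂μ) / (Nat.factorial k : ℝ)
              * (∫ ω, iteratedDeriv k g (Xs ω) ∂μ)|
      ≤ b₁ / (Nat.factorial K : ℝ) * (∫ ω, |ε ω| ^ (K + 1) ∂μ)
        + b₂ / (Nat.factorial K : ℝ) * (∫ ω, |ε ω| ^ M ∂μ) := by
  have hK1 : 1 ≤ K := le_trans one_le_two hK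
  -- integrability of pieces
  have measε : ∀ k : ℕ, Measurable fun ω => ε ω ^ k := fun k => hε.pow_const k
  have measf : ∀ k ≤ K, Measurable fun ω => iteratedDeriv k g (Xs ω) := fun k hk =>
    ((hg.continuous_iteratedDeriv k (by exact_mod_cast hk)).measurable).comp hXs
  have intε : ∀ k ≤ M, Integrable (fun ω => ε ω ^ k) μ := fun k hk =>
    (hmom k hk).mono' (measε k).aestronglyMeasurable
      (Filter.Eventually.of_forall fun ω => by rw [Real.norm_eq_abs, abs_pow])
  have indep_k : ∀ k ≤ K, IndepFun (fun ω => iteratedDeriv k g (Xs ω))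
      (fun ω => ε ω ^ k) μ := fun k hk =>
    hindep.comp ((hg.continuous_iteratedDeriv k (by exact_mod_cast hk)).measurable)
      (measurable_id.pow_const k)
  have intmul : ∀ k ≤ K, Integrable (fun ω =>
      iteratedDeriv k g (Xs ω) * ε ω ^ k) μ := fun k hk =>
    (indep_k k hk).integrable_mul (hgk k hk) (intε k (by omega))
  have hintS : Integrable (fun ω => ∑ k ∈ Finset.range (K + 1),
      iteratedDeriv k g (Xs ω) * ε ω ^ k / (Nat.factorial k : ℝ)) μ := by
    apply integrable_finset_sum
    intro k hk
    exact ((intmul k (Nat.lt_succ_iff.mp (Finset.mem_range.mp hk))).div_const _)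
  -- integral of the Taylor sum
  have hIS : ∫ ω, (∑ k ∈ Finset.range (K + 1),
      iteratedDeriv k g (Xs ω) * ε ω ^ k / (Nat.factorial k : ℝ)) ∂μ
      = (∫ ω, g (Xs ω) ∂μ) + ∑ k ∈ Finset.Icc 2 K,
          (∫ ω, ε ω ^ k ∂μ) / (Nat.factorial k : ℝ)
            * (∫ ω, iteratedDeriv k g (Xs ω) ∂μ) := by
    rw [integral_finset_sum _ (fun k hk =>
      (intmul k (Nat.lt_succ_iff.mp (Finset.mem_range.mp hk))).div_const _)]
    have hterm : ∀ k ∈ Finset.range (K + 1),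
        ∫ ω, iteratedDeriv k g (Xs ω) * ε ω ^ k / (Nat.factorial k : ℝ) ∂μ
        = (∫ ω, ε ω ^ k ∂μ) / (Nat.factorial k : ℝ)
            * (∫ ω, iteratedDeriv k g (Xs ω) ∂μ) := by
      intro k hk
      have hk' : k ≤ K := Nat.lt_succ_iff.mp (Finset.mem_range.mp hk)
      rw [integral_div]
      rw [show (fun ω => iteratedDeriv k g (Xs ω) * ε ω ^ k)
        = (fun ω => iteratedDeriv k g (Xs ω)) * (fun ω => ε ω ^ k) from rfl] at *
      rw [(indep_k k hk').integral_mul_eq_mul_integral ((measf k hk').aestronglyMeasurable)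
        ((measε k).aestronglyMeasurable)]
      ring
    rw [Finset.sum_congr rfl hterm]
    rw [Finset.range_eq_Ico, ← Finset.sum_Ico_consecutive _ (by omega : 0 ≤ 2)
      (by omega : 2 ≤ K + 1)]
    have h01 : ∑ k ∈ Finset.Ico 0 2,
        (∫ ω, ε ω ^ k ∂μ) / (Nat.factorial k : ℝ)
          * (∫ ω, iteratedDeriv k g (Xs ω) ∂μ) = ∫ ω, g (Xs ω) ∂μ := by
      rw [show Finset.Ico 0 2 = {0, 1} from rfl]
      rw [Finset.sum_insert (by decide), Finset.sum_singleton]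
      simp only [pow_zero, pow_one, hmean, iteratedDeriv_zero, Nat.factorial_zero,
        Nat.factorial_one, Nat.cast_one, integral_const, measure_univ, probReal_univ, ENNReal.toReal_one,
        smul_eq_mul, mul_one, one_mul, zero_div, zero_mul, add_zero, div_one]
    rw [h01, Finset.Ico_add_one_right_eq_Icc]
  -- the remainder
  have hR : (∫ ω, g (Xs ω + ε ω) ∂μ) - (∫ ω, g (Xs ω) ∂μ)
      - ∑ k ∈ Finset.Icc 2 K,
          (∫ ω, ε ω ^ k ∂μ) / (Nat.factorial k : ℝ)
            * (∫ ω, iteratedDeriv k g (Xs ω) ∂μ)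
      = ∫ ω, (g (Xs ω + ε ω) - ∑ k ∈ Finset.range (K + 1),
          iteratedDeriv k g (Xs ω) * ε ω ^ k / (Nat.factorial k : ℝ)) ∂μ := by
    rw [integral_sub hgXe hintS, hIS]
    ring
  rw [hR]
  have hbound : ∀ ω, |g (Xs ω + ε ω) - ∑ k ∈ Finset.range (K + 1),
      iteratedDeriv k g (Xs ω) * ε ω ^ k / (Nat.factorial k : ℝ)|
      ≤ b₁ / (Nat.factorial K : ℝ) * |ε ω| ^ (K + 1)
        + b₂ / (Nat.factorial K : ℝ) * |ε ω| ^ M := fun ω =>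
    taylor_abs_bound hK1 hM hb₁ hb₂ hg hlip (Xs ω) (ε ω)
  have hintbound : Integrable (fun ω => b₁ / (Nat.factorial K : ℝ) * |ε ω| ^ (K + 1)
      + b₂ / (Nat.factorial K : ℝ) * |ε ω| ^ M) μ :=
    ((hmom (K + 1) hM).const_mul _).add ((hmom M le_rfl).const_mul _)
  calc |∫ ω, (g (Xs ω + ε ω) - ∑ k ∈ Finset.range (K + 1),
        iteratedDeriv k g (Xs ω) * ε ω ^ k / (Nat.factorial k : ℝ)) ∂μ|
      ≤ ∫ ω, |g (Xs ω + ε ω) - ∑ k ∈ Finset.range (K + 1),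
        iteratedDeriv k g (Xs ω) * ε ω ^ k / (Nat.factorial k : ℝ)| ∂μ :=
        by simpa [Real.norm_eq_abs] using
          norm_integral_le_integral_norm (μ := μ) (f := fun ω => g (Xs ω + ε ω)
            - ∑ k ∈ Finset.range (K + 1),
              iteratedDeriv k g (Xs ω) * ε ω ^ k / (Nat.factorial k : ℝ))
    _ ≤ ∫ ω, (b₁ / (Nat.factorial K : ℝ) * |ε ω| ^ (K + 1)
        + b₂ / (Nat.factorial K : ℝ) * |ε ω| ^ M) ∂μ :=
        integral_mono (hgXe.sub hintS).abs hintbound hbound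
    _ = b₁ / (Nat.factorial K : ℝ) * (∫ ω, |ε ω| ^ (K + 1) ∂μ)
        + b₂ / (Nat.factorial K : ℝ) * (∫ ω, |ε ω| ^ M ∂μ) := by
        rw [integral_add ((hmom (K + 1) hM).const_mul _) ((hmom M le_rfl).const_mul _),
          integral_const_mul, integral_const_mul]
end

section
/- Under the hypotheses of the K-th order expansion (g is K-times continuously differentiable with the generalized Lipschitz condition on g^{(K)}, X* ⟂ ε, E[ε] = 0, suitable moment bounds), and with γ₂,...,γ_K defined recursively by γ₂ = E[ε²]/2, γ₃ = E[ε³]/6, γₖ = E[εᵏ]/k! − Σ_{ℓ=2}^{k−2}(E[ε^{k−ℓ}]/(k−ℓ)!)γ_ℓ for k ≥ 4, define the corrected function ψ(x) = g(x) − Σ_{k=2}^{K} γₖ g^{(k)}(x). Then |E[ψ(X*+ε)] − E[g(X*)]| ≤ C·(E[|ε|^{K+1}] + E[|ε|^{M}]), where C depends only on K, the Lipschitz constants, the moment bounds E[|g^{(k)}(X*)|], E[b_j(X*)], and the bounds on the standardized moments of ε. -/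
open MeasureTheory ProbabilityTheory
open scoped BigOperators

/-- The recursively defined bias-correction coefficients `γₖ` built from the
moments `m k = E[εᵏ]` of the measurement error. -/
noncomputable def gammaCoef (m : ℕ → ℝ) : ℕ → ℝ
  | 0 => 0
  | 1 => 0
  | 2 => m 2 / 2
  | 3 => m 3 / 6
  | k + 4 =>
      m (k + 4) / (Nat.factorial (k + 4) : ℝ) -
        ∑ ℓ ∈ (Finset.Icc 2 (k + 2)).attach,
          m (k + 4 - ℓ.1) / (Nat.factorial (k + 4 - ℓ.1) : ℝ) * gammaCoef m ℓ.1
  termination_by k => k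
  decreasing_by
    have := (Finset.mem_Icc.mp ℓ.2).2
    omega

/-- The corrected moment function `ψ(x) = g(x) - ∑_{k=2}^K γₖ g⁽ᵏ⁾(x)`. -/
noncomputable def correctedFun (g : ℝ → ℝ) (K : ℕ) (γ : ℕ → ℝ) (x : ℝ) : ℝ :=
  g x - ∑ k ∈ Finset.Icc 2 K, γ k * iteratedDeriv k g x

/-! ### Auxiliary lemmas -/

lemma abs_le_abs_of_mem_uIcc {e t : ℝ} (ht : t ∈ Set.uIcc 0 e) : |t| ≤ |e| := by
  rw [Set.uIcc, Set.mem_Icc] at ht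
  rw [abs_le]
  refine ⟨le_trans (le_min (neg_nonpos.mpr (abs_nonneg e)) (neg_abs_le e)) ht.1,
    le_trans ht.2 (max_le (abs_nonneg e) (le_abs_self e))⟩

lemma taylor_bound (p : ℕ) (b₁ b₂ : ℝ) (hb₁ : 0 ≤ b₁) (hb₂ : 0 ≤ b₂) :
    ∀ (n : ℕ) (f : ℝ → ℝ), ContDiff ℝ n f →
    (∀ x x' : ℝ, |iteratedDeriv n f x' - iteratedDeriv n f x|
      ≤ b₁ * |x' - x| + b₂ * |x' - x| ^ p) →
    ∀ x e : ℝ,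
      |f (x + e) - ∑ j ∈ Finset.range (n + 1),
          iteratedDeriv j f x * e ^ j / (Nat.factorial j : ℝ)|
        ≤ b₁ * |e| ^ (n + 1) + b₂ * |e| ^ (n + p) := by
  intro n
  induction n with
  | zero =>
    intro f _ hlip x e
    have := hlip x (x + e)
    simpa using this
  | succ n ih =>
    intro f hf hlip x e
    have hf1 : ContDiff ℝ ((n : WithTop ℕ∞) + 1) f := by exact_mod_cast hf
    have hfd : Differentiable ℝ f := hf1.differentiable (by simp)
    have hf' : ContDiff ℝ n (deriv f) := (contDiff_succ_iff_deriv.mp hf1).2.2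
    have hlip' : ∀ x x' : ℝ, |iteratedDeriv n (deriv f) x' - iteratedDeriv n (deriv f) x|
        ≤ b₁ * |x' - x| + b₂ * |x' - x| ^ p := by
      intro x x'
      rw [← iteratedDeriv_succ']
      exact hlip x x'
    have IH := ih (deriv f) hf' hlip' x
    set F : ℝ → ℝ := fun t => f (x + t) - ∑ j ∈ Finset.range (n + 2),
        iteratedDeriv j f x * t ^ j / (Nat.factorial j : ℝ) with hF
    set G : ℝ → ℝ := fun t => deriv f (x + t) - ∑ j ∈ Finset.range (n + 1),
        iteratedDeriv (j + 1) f x * t ^ j / (Nat.factorial j : ℝ) with hG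
    have hGbound : ∀ t : ℝ, |G t| ≤ b₁ * |t| ^ (n + 1) + b₂ * |t| ^ (n + p) := by
      intro t
      have h := IH t
      simp only [← iteratedDeriv_succ'] at h
      simpa [hG] using h
    have hF0 : F 0 = 0 := by
      simp only [hF, add_zero]
      rw [Finset.sum_eq_single 0]
      · simp
      · intro j _ hj
        rcases Nat.exists_eq_succ_of_ne_zero hj with ⟨i, rfl⟩
        simp [zero_pow]
      · intro h; simp at h
    have hFd : ∀ t : ℝ, HasDerivAt F (G t) t := by
      intro t
      have h1 : HasDerivAt (fun t : ℝ => f (x + t)) (deriv f (x + t)) t := by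
        have hin : HasDerivAt (fun t : ℝ => x + t) 1 t := (hasDerivAt_id t).const_add x
        have := HasDerivAt.comp t (hfd (x + t)).hasDerivAt hin
        simpa [Function.comp_def] using this
      have h2 : HasDerivAt (fun t : ℝ => ∑ j ∈ Finset.range (n + 2),
          iteratedDeriv j f x * t ^ j / (Nat.factorial j : ℝ))
          (∑ j ∈ Finset.range (n + 2),
            iteratedDeriv j f x * ((j : ℝ) * t ^ (j - 1)) / (Nat.factorial j : ℝ)) t := by
        refine HasDerivAt.fun_sum fun j _ => ?_
        exact ((hasDerivAt_pow j t).const_mul (iteratedDeriv j f x)).div_const _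
      have hsum : ∑ j ∈ Finset.range (n + 2),
            iteratedDeriv j f x * ((j : ℝ) * t ^ (j - 1)) / (Nat.factorial j : ℝ)
          = ∑ j ∈ Finset.range (n + 1),
            iteratedDeriv (j + 1) f x * t ^ j / (Nat.factorial j : ℝ) := by
        rw [Finset.sum_range_succ' (fun j => iteratedDeriv j f x * ((j : ℝ) * t ^ (j - 1))
          / (Nat.factorial j : ℝ)) (n + 1)]
        simp only [Nat.cast_zero, zero_mul, mul_zero, zero_div, add_zero]
        refine Finset.sum_congr rfl fun j _ => ?_
        have hfac : (Nat.factorial (j + 1) : ℝ) = (j + 1 : ℝ) * (Nat.factorial j : ℝ) := by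
          rw [Nat.factorial_succ]; push_cast; ring
        have hfj : (Nat.factorial j : ℝ) ≠ 0 := Nat.cast_ne_zero.mpr (Nat.factorial_ne_zero j)
        rw [hfac, Nat.add_sub_cancel]
        push_cast
        field_simp
      have h3 := h1.sub h2
      rw [hsum] at h3
      exact h3
    have key := Convex.norm_image_sub_le_of_norm_hasDerivWithin_le
      (f := F) (f' := G) (C := b₁ * |e| ^ (n + 1) + b₂ * |e| ^ (n + p))
      (s := Set.uIcc (0 : ℝ) e)
      (fun t _ => (hFd t).hasDerivWithinAt)
      (fun t ht => by
        have h1 := hGbound t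
        have h2 : |t| ≤ |e| := abs_le_abs_of_mem_uIcc ht
        have : b₁ * |t| ^ (n + 1) + b₂ * |t| ^ (n + p)
            ≤ b₁ * |e| ^ (n + 1) + b₂ * |e| ^ (n + p) := by
          gcongr <;> first | exact h2 | positivity
        calc ‖G t‖ = |G t| := rfl
          _ ≤ _ := h1.trans this)
      (convex_uIcc 0 e) (Set.left_mem_uIcc) (Set.right_mem_uIcc)
    rw [hF0, sub_zero, sub_zero] at key
    have hkey : |F e| ≤ (b₁ * |e| ^ (n + 1) + b₂ * |e| ^ (n + p)) * |e| := key
    calc |f (x + e) - ∑ j ∈ Finset.range (n + 1 + 1),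
          iteratedDeriv j f x * e ^ j / (Nat.factorial j : ℝ)|
        = |F e| := rfl
      _ ≤ (b₁ * |e| ^ (n + 1) + b₂ * |e| ^ (n + p)) * |e| := hkey
      _ = b₁ * |e| ^ (n + 1 + 1) + b₂ * |e| ^ (n + 1 + p) := by ring

lemma sigma_pow_le {Ω : Type} [MeasurableSpace Ω] (μ : Measure Ω) [IsProbabilityMeasure μ]
    (ε : Ω → ℝ) (σ : ℝ) (hσ : 0 < σ)
    (hσ2 : (∫ ω, ε ω ^ 2 ∂μ) = σ ^ 2) (n : ℕ) (hn : 2 ≤ n)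
    (hint2 : Integrable (fun ω => |ε ω| ^ 2) μ)
    (hintn : Integrable (fun ω => |ε ω| ^ n) μ) :
    σ ^ n ≤ ∫ ω, |ε ω| ^ n ∂μ := by
  set q : ℝ := (n : ℝ) / 2 with hq
  have hq1 : 1 ≤ q := by
    rw [hq, le_div_iff₀ (by norm_num : (0:ℝ) < 2)]
    exact_mod_cast hn
  have hconv : ConvexOn ℝ (Set.Ici 0) fun x : ℝ => x ^ q := convexOn_rpow hq1
  have hcont : ContinuousOn (fun x : ℝ => x ^ q) (Set.Ici 0) := by
    intro x hx
    exact (Real.continuousAt_rpow_const x q (Or.inr (by linarith))).continuousWithinAt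
  have hcomp : ∀ ω, ((ε ω ^ 2) ^ q) = |ε ω| ^ n := by
    intro ω
    have h1 : ε ω ^ 2 = |ε ω| ^ 2 := (sq_abs _).symm
    rw [h1, ← Real.rpow_natCast (|ε ω|) 2, ← Real.rpow_natCast (|ε ω|) n,
      ← Real.rpow_mul (abs_nonneg _)]
    congr 1
    rw [hq]; push_cast; ring
  have hfi : Integrable (fun ω => ε ω ^ 2) μ :=
    hint2.congr (Filter.Eventually.of_forall fun ω => (sq_abs _))
  have hgi : Integrable ((fun x : ℝ => x ^ q) ∘ fun ω => ε ω ^ 2) μ := by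
    refine hintn.congr (Filter.Eventually.of_forall fun ω => ?_)
    simp [Function.comp, hcomp ω]
  have hfs : ∀ᵐ ω ∂μ, ε ω ^ 2 ∈ Set.Ici (0:ℝ) :=
    Filter.Eventually.of_forall fun ω => Set.mem_Ici.mpr (sq_nonneg _)
  have hjen := hconv.map_integral_le hcont isClosed_Ici hfs hfi hgi
  rw [hσ2] at hjen
  have hL : (σ ^ 2) ^ q = σ ^ n := by
    rw [← Real.rpow_natCast σ 2, ← Real.rpow_natCast σ n, ← Real.rpow_mul hσ.le]
    congr 1
    rw [hq]; push_cast; ring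
  calc σ ^ n = (σ ^ 2) ^ q := hL.symm
    _ ≤ ∫ ω, (ε ω ^ 2) ^ q ∂μ := hjen
    _ = ∫ ω, |ε ω| ^ n ∂μ :=
        integral_congr_ae (Filter.Eventually.of_forall fun ω => hcomp ω)

noncomputable def gammaBound (c : ℝ) : ℕ → ℝ
  | 0 => 0
  | 1 => 0
  | 2 => c / 2
  | 3 => c / 6
  | k + 4 =>
      c / (Nat.factorial (k + 4) : ℝ) +
        ∑ ℓ ∈ (Finset.Icc 2 (k + 2)).attach,
          c / (Nat.factorial (k + 4 - ℓ.1) : ℝ) * gammaBound c ℓ.1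
  termination_by k => k
  decreasing_by
    have := (Finset.mem_Icc.mp ℓ.2).2
    omega

lemma gammaBound_nonneg (c : ℝ) (hc : 0 ≤ c) : ∀ k, 0 ≤ gammaBound c k := by
  intro k
  induction k using Nat.strong_induction_on with
  | _ k ih =>
    match k with
    | 0 => simp [gammaBound]
    | 1 => simp [gammaBound]
    | 2 => simp [gammaBound]; positivity
    | 3 => simp [gammaBound]; positivity
    | (k + 4) =>
      rw [gammaBound]
      have h1 : 0 ≤ c / (Nat.factorial (k + 4) : ℝ) := by positivity
      refine add_nonneg h1 (Finset.sum_nonneg fun ℓ _ => ?_)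
      have hℓ := (Finset.mem_Icc.mp ℓ.2).2
      exact mul_nonneg (by positivity) (ih ℓ.1 (by omega))

lemma abs_gammaCoef_le (m : ℕ → ℝ) (c s : ℝ) (hc : 0 ≤ c) (hs : 0 ≤ s) :
    ∀ k, (∀ j ≤ k, |m j| ≤ c * s ^ j) → |gammaCoef m k| ≤ gammaBound c k * s ^ k := by
  intro k
  induction k using Nat.strong_induction_on with
  | _ k ih =>
    intro hm
    match k with
    | 0 => simp [gammaCoef, gammaBound]
    | 1 => simp [gammaCoef, gammaBound]
    | 2 =>
      rw [gammaCoef, gammaBound]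
      rw [abs_div]
      rw [abs_of_nonneg (by norm_num : (0:ℝ) ≤ 2)]
      calc |m 2| / 2 ≤ c * s ^ 2 / 2 := by linarith [hm 2 le_rfl]
        _ = c / 2 * s ^ 2 := by ring
    | 3 =>
      rw [gammaCoef, gammaBound]
      rw [abs_div]
      rw [abs_of_nonneg (by norm_num : (0:ℝ) ≤ 6)]
      calc |m 3| / 6 ≤ c * s ^ 3 / 6 := by linarith [hm 3 le_rfl]
        _ = c / 6 * s ^ 3 := by ring
    | (k + 4) =>
      rw [gammaCoef, gammaBound]
      have hfac : ∀ j : ℕ, (0:ℝ) < (Nat.factorial j : ℝ) := fun j =>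
        Nat.cast_pos.mpr (Nat.factorial_pos j)
      calc |m (k + 4) / (Nat.factorial (k + 4) : ℝ) -
            ∑ ℓ ∈ (Finset.Icc 2 (k + 2)).attach,
              m (k + 4 - ℓ.1) / (Nat.factorial (k + 4 - ℓ.1) : ℝ) * gammaCoef m ℓ.1|
          ≤ |m (k + 4)| / (Nat.factorial (k + 4) : ℝ) +
            ∑ ℓ ∈ (Finset.Icc 2 (k + 2)).attach,
              |m (k + 4 - ℓ.1)| / (Nat.factorial (k + 4 - ℓ.1) : ℝ) * |gammaCoef m ℓ.1| := by
            refine (abs_sub _ _).trans ?_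
            gcongr
            · rw [abs_div, abs_of_nonneg (hfac _).le]
            · refine (Finset.abs_sum_le_sum_abs _ _).trans ?_
              refine Finset.sum_le_sum fun ℓ _ => ?_
              rw [abs_mul, abs_div, abs_of_nonneg (hfac _).le]
        _ ≤ c * s ^ (k + 4) / (Nat.factorial (k + 4) : ℝ) +
            ∑ ℓ ∈ (Finset.Icc 2 (k + 2)).attach,
              (c * s ^ (k + 4 - ℓ.1)) / (Nat.factorial (k + 4 - ℓ.1) : ℝ) *
                (gammaBound c ℓ.1 * s ^ ℓ.1) := by
            gcongr with ℓ hℓ <;>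
              first
                | exact hfac _
                | exact hm (k + 4) le_rfl
                | exact abs_nonneg _
                | exact hm _ (by have := (Finset.mem_Icc.mp ℓ.2).2; omega)
                | exact ih ℓ.1 (by have := (Finset.mem_Icc.mp ℓ.2).2; omega)
                    (fun j hj => hm j (by have := (Finset.mem_Icc.mp ℓ.2).2; omega))
        _ = (c / (Nat.factorial (k + 4) : ℝ) +
            ∑ ℓ ∈ (Finset.Icc 2 (k + 2)).attach,
              c / (Nat.factorial (k + 4 - ℓ.1) : ℝ) * gammaBound c ℓ.1) * s ^ (k + 4) := by
            rw [add_mul, Finset.sum_mul]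
            congr 1
            · ring
            · refine Finset.sum_congr rfl fun ℓ _ => ?_
              have hℓ2 := (Finset.mem_Icc.mp ℓ.2)
              have hpow : s ^ (k + 4 - ℓ.1) * s ^ ℓ.1 = s ^ (k + 4) := by
                rw [← pow_add]
                congr 1
                omega
              have h4 : c * s ^ (k + 4 - ℓ.1) / (Nat.factorial (k + 4 - ℓ.1) : ℝ) *
                  (gammaBound c ℓ.1 * s ^ ℓ.1)
                  = c / (Nat.factorial (k + 4 - ℓ.1) : ℝ) * gammaBound c ℓ.1 *
                    (s ^ (k + 4 - ℓ.1) * s ^ ℓ.1) := by ring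
              rw [h4, hpow]

lemma gammaCoef_identity (m : ℕ → ℝ) (h0 : m 0 = 1) (h1 : m 1 = 0) (r : ℕ) (hr : 2 ≤ r) :
    ∑ ℓ ∈ Finset.Icc 2 r, m (r - ℓ) / (Nat.factorial (r - ℓ) : ℝ) * gammaCoef m ℓ
      = m r / (Nat.factorial r : ℝ) := by
  match r, hr with
  | 2, _ => simp [gammaCoef, h0]
  | 3, _ =>
    rw [show Finset.Icc 2 3 = {2, 3} from rfl]
    simp [gammaCoef, h0, h1]
    norm_num [Nat.factorial]
  | (k + 4), _ =>
    have e1 : Finset.Icc 2 (k + 4) = insert (k + 4) (insert (k + 3) (Finset.Icc 2 (k + 2))) := by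
      ext x; simp only [Finset.mem_insert, Finset.mem_Icc]; omega
    rw [e1, Finset.sum_insert (by simp only [Finset.mem_insert, Finset.mem_Icc]; omega),
      Finset.sum_insert (by simp only [Finset.mem_Icc]; omega)]
    have h2 : k + 4 - (k + 4) = 0 := by omega
    have h3 : k + 4 - (k + 3) = 1 := by omega
    rw [h2, h3, h1, h0]
    simp only [Nat.factorial_zero, Nat.cast_one, zero_div, zero_mul, zero_add, div_one, one_mul]
    have e2 : ∑ ℓ ∈ Finset.Icc 2 (k + 2),
          m (k + 4 - ℓ) / (Nat.factorial (k + 4 - ℓ) : ℝ) * gammaCoef m ℓ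
        = ∑ ℓ ∈ (Finset.Icc 2 (k + 2)).attach,
          m (k + 4 - ℓ.1) / (Nat.factorial (k + 4 - ℓ.1) : ℝ) * gammaCoef m ℓ.1 :=
      (Finset.sum_attach _ _).symm
    rw [gammaCoef, e2]
    ring

lemma iteratedDeriv_comp_iteratedDeriv (k j : ℕ) (g : ℝ → ℝ) :
    iteratedDeriv j (iteratedDeriv k g) = iteratedDeriv (k + j) g := by
  rw [iteratedDeriv_eq_iterate, iteratedDeriv_eq_iterate, iteratedDeriv_eq_iterate,
    add_comm k j, Function.iterate_add_apply]

lemma sum_shift (k n : ℕ) (F : ℕ → ℝ) (mm : ℕ → ℝ) :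
    ∑ r ∈ Finset.Icc k (k + n), F r * mm (r - k) / (Nat.factorial (r - k) : ℝ)
      = ∑ j ∈ Finset.range (n + 1), F (k + j) * mm j / (Nat.factorial j : ℝ) := by
  induction n with
  | zero => simp
  | succ n ih =>
    rw [show k + (n + 1) = (k + n) + 1 by omega,
      ← Finset.insert_Icc_right_eq_Icc_add_one (by omega : k ≤ k + n + 1),
      Finset.sum_insert (by simp [Finset.mem_Icc]), Finset.sum_range_succ, ih,
      show k + n + 1 - k = n + 1 by omega,
      show k + n + 1 = k + (n + 1) by omega]
    ring

lemma sum_Icc_swap (f : ℕ → ℕ → ℝ) (a b : ℕ) :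
    ∑ k ∈ Finset.Icc a b, ∑ r ∈ Finset.Icc k b, f k r
      = ∑ r ∈ Finset.Icc a b, ∑ k ∈ Finset.Icc a r, f k r := by
  have h1 : ∀ k ∈ Finset.Icc a b,
      ∑ r ∈ Finset.Icc k b, f k r = ∑ r ∈ Finset.Icc a b, if k ≤ r then f k r else 0 := by
    intro k hk
    rw [Finset.mem_Icc] at hk
    rw [← Finset.sum_filter]
    congr 1
    ext r
    simp only [Finset.mem_filter, Finset.mem_Icc]
    omega
  rw [Finset.sum_congr rfl h1, Finset.sum_comm]
  refine Finset.sum_congr rfl fun r hr => ?_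
  rw [Finset.mem_Icc] at hr
  rw [← Finset.sum_filter]
  congr 1
  ext k
  simp only [Finset.mem_filter, Finset.mem_Icc]
  omega

theorem corrected_moment_validity
    {Ω : Type} [MeasurableSpace Ω] (μ : Measure Ω) [IsProbabilityMeasure μ]
    (K M : ℕ) (hK : 2 ≤ K) (hM : K + 1 ≤ M)
    (g : ℝ → ℝ) (b₁ b₂ Bg Cm : ℝ) (hb₁ : 0 ≤ b₁) (hb₂ : 0 ≤ b₂)
    (hg : ContDiff ℝ K g)
    (hlip : ∀ x x' : ℝ, |iteratedDeriv K g x' - iteratedDeriv K g x|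
        ≤ b₁ * |x' - x| + b₂ * |x' - x| ^ (M - K)) :
    ∃ C : ℝ, 0 ≤ C ∧
      ∀ (Xs ε : Ω → ℝ) (σ : ℝ), Measurable Xs → Measurable ε →
        IndepFun Xs ε μ →
        (∫ ω, ε ω ∂μ) = 0 → 0 < σ → (∫ ω, ε ω ^ 2 ∂μ) = σ ^ 2 →
        (∀ m ≤ M, Integrable (fun ω => |ε ω| ^ m) μ) →
        (∀ m ≤ M, (∫ ω, |ε ω / σ| ^ m ∂μ) ≤ Cm) →
        (∀ k ≤ K, Integrable (fun ω => iteratedDeriv k g (Xs ω)) μ) →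
        (∀ k ≤ K, (∫ ω, |iteratedDeriv k g (Xs ω)| ∂μ) ≤ Bg) →
        (∀ k ≤ K, Integrable (fun ω => iteratedDeriv k g (Xs ω + ε ω)) μ) →
        Integrable (fun ω => g (Xs ω + ε ω)) μ →
        |(∫ ω, correctedFun g K (gammaCoef fun j => ∫ ω', ε ω' ^ j ∂μ) (Xs ω + ε ω) ∂μ)
            - (∫ ω, g (Xs ω) ∂μ)|
          ≤ C * ((∫ ω, |ε ω| ^ (K + 1) ∂μ) + (∫ ω, |ε ω| ^ M ∂μ)) := by
  classical
  set c : ℝ := |Cm| with hc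
  have hc0 : 0 ≤ c := abs_nonneg _
  set D : ℕ → ℝ := gammaBound c with hD
  have hD0 : ∀ k, 0 ≤ D k := gammaBound_nonneg c hc0
  refine ⟨(b₁ + b₂) * (1 + c * ∑ k ∈ Finset.Icc 2 K, D k), ?_, ?_⟩
  · have : 0 ≤ ∑ k ∈ Finset.Icc 2 K, D k := Finset.sum_nonneg fun k _ => hD0 k
    positivity
  intro Xs ε σ hXs hε hindep hε1 hσ hσ2 hintM hCm hintX hBg hintXε hintg
  set m : ℕ → ℝ := fun j => ∫ ω', ε ω' ^ j ∂μ with hm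
  set γ : ℕ → ℝ := gammaCoef m with hγ
  set G : ℕ → ℝ := fun i => ∫ ω, iteratedDeriv i g (Xs ω) ∂μ with hGdef
  set A : ℝ := ∫ ω, |ε ω| ^ (K + 1) ∂μ with hA
  set B : ℝ := ∫ ω, |ε ω| ^ M ∂μ with hB
  have hA0 : 0 ≤ A := integral_nonneg fun ω => by positivity
  have hB0 : 0 ≤ B := integral_nonneg fun ω => by positivity
  -- basic moment facts
  have hm0 : m 0 = 1 := by simp [hm]
  have hm1 : m 1 = 0 := by simpa [hm] using hε1
  -- |ε|^j integrals bounded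
  have hmom : ∀ j ≤ M, (∫ ω, |ε ω| ^ j ∂μ) ≤ c * σ ^ j := by
    intro j hj
    have h1 : (∫ ω, |ε ω / σ| ^ j ∂μ) = (∫ ω, |ε ω| ^ j ∂μ) / σ ^ j := by
      rw [← integral_div]
      refine integral_congr_ae (Filter.Eventually.of_forall fun ω => ?_)
      show |ε ω / σ| ^ j = |ε ω| ^ j / σ ^ j
      rw [abs_div, div_pow, abs_of_pos hσ]
    have h2 := hCm j hj
    rw [h1] at h2
    have h3 : (∫ ω, |ε ω| ^ j ∂μ) ≤ Cm * σ ^ j := by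
      rw [div_le_iff₀ (by positivity)] at h2
      exact h2
    calc (∫ ω, |ε ω| ^ j ∂μ) ≤ Cm * σ ^ j := h3
      _ ≤ c * σ ^ j := by
          have : Cm ≤ c := le_abs_self Cm
          have hσj : (0:ℝ) ≤ σ ^ j := by positivity
          nlinarith
  have habsm : ∀ j ≤ M, |m j| ≤ c * σ ^ j := by
    intro j hj
    have h1 : |m j| ≤ ∫ ω, |ε ω| ^ j ∂μ := by
      have := norm_integral_le_integral_norm (μ := μ) (f := fun ω => ε ω ^ j)
      simpa [abs_pow] using this
    exact h1.trans (hmom j hj)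
  -- gamma bound
  have hγbound : ∀ k ≤ K, |γ k| ≤ D k * σ ^ k := fun k hk =>
    abs_gammaCoef_le m c σ hc0 hσ.le k (fun j hj => habsm j (by omega))
  -- integrability of ε powers
  have hintεpow : ∀ j ≤ M, Integrable (fun ω => ε ω ^ j) μ := by
    intro j hj
    refine (hintM j hj).mono' ((hε.pow_const j).aestronglyMeasurable) ?_
    exact Filter.Eventually.of_forall fun ω => by simp [abs_pow]
  -- measurability and independence of composed functions
  have hmeasd : ∀ i ≤ K, Measurable (iteratedDeriv i g) := fun i hi =>
    (hg.continuous_iteratedDeriv i (by exact_mod_cast Nat.cast_le.mpr hi)).measurable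
  have hindep' : ∀ i j, i ≤ K →
      IndepFun (fun ω => iteratedDeriv i g (Xs ω)) (fun ω => ε ω ^ j) μ :=
    fun i j hi => hindep.comp (hmeasd i hi) (measurable_id.pow_const j)
  -- products
  have hintprod : ∀ i j, i ≤ K → j ≤ M →
      Integrable (fun ω => iteratedDeriv i g (Xs ω) * ε ω ^ j / (Nat.factorial j : ℝ)) μ := by
    intro i j hi hj
    exact ((hindep' i j hi).integrable_mul (hintX i hi) (hintεpow j hj)).div_const _
  have hIprod : ∀ i j, i ≤ K → j ≤ M →
      (∫ ω, iteratedDeriv i g (Xs ω) * ε ω ^ j / (Nat.factorial j : ℝ) ∂μ)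
        = G i * m j / (Nat.factorial j : ℝ) := by
    intro i j hi hj
    rw [integral_div]
    congr 1
    exact (hindep' i j hi).integral_mul_eq_mul_integral
      ((hmeasd i hi).comp hXs).aestronglyMeasurable
      ((hε.pow_const j).aestronglyMeasurable)
  -- remainder functions
  set R : ℕ → Ω → ℝ := fun k ω => iteratedDeriv k g (Xs ω + ε ω) -
      ∑ j ∈ Finset.range (K - k + 1),
        iteratedDeriv (k + j) g (Xs ω) * ε ω ^ j / (Nat.factorial j : ℝ) with hR
  set T : ℕ → ℝ := fun k => ∑ j ∈ Finset.range (K - k + 1),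
      G (k + j) * m j / (Nat.factorial j : ℝ) with hT
  have hintsum : ∀ k ≤ K, Integrable (fun ω => ∑ j ∈ Finset.range (K - k + 1),
      iteratedDeriv (k + j) g (Xs ω) * ε ω ^ j / (Nat.factorial j : ℝ)) μ := by
    intro k hk
    refine integrable_finset_sum _ fun j hj => ?_
    rw [Finset.mem_range] at hj
    exact hintprod (k + j) j (by omega) (by omega)
  have hintR : ∀ k ≤ K, Integrable (R k) μ := fun k hk =>
    (hintXε k hk).sub (hintsum k hk)
  have hIR : ∀ k ≤ K, (∫ ω, iteratedDeriv k g (Xs ω + ε ω) ∂μ) = T k + ∫ ω, R k ω ∂μ := by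
    intro k hk
    have h1 : (∫ ω, R k ω ∂μ)
        = (∫ ω, iteratedDeriv k g (Xs ω + ε ω) ∂μ) -
          ∫ ω, ∑ j ∈ Finset.range (K - k + 1),
            iteratedDeriv (k + j) g (Xs ω) * ε ω ^ j / (Nat.factorial j : ℝ) ∂μ :=
      integral_sub (hintXε k hk) (hintsum k hk)
    have h2 : (∫ ω, ∑ j ∈ Finset.range (K - k + 1),
        iteratedDeriv (k + j) g (Xs ω) * ε ω ^ j / (Nat.factorial j : ℝ) ∂μ) = T k := by
      rw [integral_finset_sum _ fun j hj => by
        rw [Finset.mem_range] at hj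
        exact hintprod (k + j) j (by omega) (by omega)]
      refine Finset.sum_congr rfl fun j hj => ?_
      rw [Finset.mem_range] at hj
      exact hIprod (k + j) j (by omega) (by omega)
    rw [h2] at h1
    linarith
  -- pointwise taylor bound on remainders
  have hRbound : ∀ k ≤ K, ∀ ω,
      |R k ω| ≤ b₁ * |ε ω| ^ (K - k + 1) + b₂ * |ε ω| ^ (M - k) := by
    intro k hk ω
    have hcd : ContDiff ℝ ((K - k : ℕ) : WithTop ℕ∞) (iteratedDeriv k g) := by
      rw [iteratedDeriv_eq_iterate]
      refine ContDiff.iterate_deriv' (K - k) k ?_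
      rw [show K - k + k = K by omega]
      exact hg
    have hlip' : ∀ x x' : ℝ,
        |iteratedDeriv (K - k) (iteratedDeriv k g) x' -
          iteratedDeriv (K - k) (iteratedDeriv k g) x|
          ≤ b₁ * |x' - x| + b₂ * |x' - x| ^ (M - K) := by
      intro x x'
      rw [iteratedDeriv_comp_iteratedDeriv, show k + (K - k) = K by omega]
      exact hlip x x'
    have := taylor_bound (M - K) b₁ b₂ hb₁ hb₂ (K - k) (iteratedDeriv k g) hcd hlip'
      (Xs ω) (ε ω)
    have heq : ∑ j ∈ Finset.range (K - k + 1),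
        iteratedDeriv j (iteratedDeriv k g) (Xs ω) * ε ω ^ j / (Nat.factorial j : ℝ)
        = ∑ j ∈ Finset.range (K - k + 1),
          iteratedDeriv (k + j) g (Xs ω) * ε ω ^ j / (Nat.factorial j : ℝ) := by
      refine Finset.sum_congr rfl fun j _ => ?_
      rw [iteratedDeriv_comp_iteratedDeriv]
    rw [heq] at this
    have hexp : K - k + (M - K) = M - k := by omega
    rw [hexp] at this
    exact this
  -- integral bound on remainders
  have hIRbound : ∀ k ≤ K, |∫ ω, R k ω ∂μ|
      ≤ b₁ * (∫ ω, |ε ω| ^ (K - k + 1) ∂μ) + b₂ * (∫ ω, |ε ω| ^ (M - k) ∂μ) := by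
    intro k hk
    have h1 : |∫ ω, R k ω ∂μ| ≤ ∫ ω, |R k ω| ∂μ := by
      simpa using norm_integral_le_integral_norm (μ := μ) (f := R k)
    have h2 : (∫ ω, |R k ω| ∂μ)
        ≤ ∫ ω, b₁ * |ε ω| ^ (K - k + 1) + b₂ * |ε ω| ^ (M - k) ∂μ := by
      refine integral_mono (hintR k hk).abs ?_ (fun ω => hRbound k hk ω)
      exact ((hintM (K - k + 1) (by omega)).const_mul b₁).add
        ((hintM (M - k) (by omega)).const_mul b₂)
    rw [integral_add ((hintM (K - k + 1) (by omega)).const_mul b₁)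
      ((hintM (M - k) (by omega)).const_mul b₂), integral_const_mul, integral_const_mul] at h2
    exact h1.trans h2
  -- key sigma inequalities
  have hσA : σ ^ (K + 1) ≤ A :=
    sigma_pow_le μ ε σ hσ hσ2 (K + 1) (by omega) (hintM 2 (by omega)) (hintM (K + 1) (by omega))
  have hσB : σ ^ M ≤ B :=
    sigma_pow_le μ ε σ hσ hσ2 M (by omega) (hintM 2 (by omega)) (hintM M (by omega))
  -- decomposition
  have hintγsum : Integrable (fun ω => ∑ k ∈ Finset.Icc 2 K,
      γ k * iteratedDeriv k g (Xs ω + ε ω)) μ := by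
    refine integrable_finset_sum _ fun k hk => ?_
    rw [Finset.mem_Icc] at hk
    exact (hintXε k hk.2).const_mul _
  have hLHS : (∫ ω, correctedFun g K γ (Xs ω + ε ω) ∂μ)
      = (∫ ω, g (Xs ω + ε ω) ∂μ) - ∑ k ∈ Finset.Icc 2 K,
          γ k * ∫ ω, iteratedDeriv k g (Xs ω + ε ω) ∂μ := by
    simp only [correctedFun]
    rw [integral_sub hintg hintγsum, integral_finset_sum _ fun k hk => by
      rw [Finset.mem_Icc] at hk
      exact (hintXε k hk.2).const_mul _]
    congr 1
    exact Finset.sum_congr rfl fun k _ => integral_const_mul _ _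
  have hg0 : (∫ ω, g (Xs ω + ε ω) ∂μ) = T 0 + ∫ ω, R 0 ω ∂μ := by
    have := hIR 0 (by omega)
    simpa [iteratedDeriv_zero] using this
  -- the combinatorial identity
  have hT' : ∀ k ≤ K, T k = ∑ r ∈ Finset.Icc k K,
      G r * m (r - k) / (Nat.factorial (r - k) : ℝ) := by
    intro k hk
    have h := sum_shift k (K - k) G m
    rw [show k + (K - k) = K by omega] at h
    exact h.symm
  have hT0 : T 0 = G 0 + ∑ r ∈ Finset.Icc 2 K, G r * m r / (Nat.factorial r : ℝ) := by
    rw [hT' 0 (by omega)]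
    have e1 : Finset.Icc 0 K = insert 0 (insert 1 (Finset.Icc 2 K)) := by
      rw [show (2:ℕ) = 1 + 1 from rfl, Finset.insert_Icc_add_one_left_eq_Icc (by omega),
        show (1:ℕ) = 0 + 1 from rfl, Finset.insert_Icc_add_one_left_eq_Icc (by omega)]
    rw [e1, Finset.sum_insert (by simp only [Finset.mem_insert, Finset.mem_Icc]; omega),
      Finset.sum_insert (by simp only [Finset.mem_Icc]; omega)]
    simp [hm0, hm1]
  have hswap : ∑ k ∈ Finset.Icc 2 K, γ k * T k
      = ∑ r ∈ Finset.Icc 2 K, G r * m r / (Nat.factorial r : ℝ) := by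
    have h1 : ∑ k ∈ Finset.Icc 2 K, γ k * T k
        = ∑ k ∈ Finset.Icc 2 K, ∑ r ∈ Finset.Icc k K,
          γ k * (G r * m (r - k) / (Nat.factorial (r - k) : ℝ)) := by
      refine Finset.sum_congr rfl fun k hk => ?_
      rw [Finset.mem_Icc] at hk
      rw [hT' k hk.2, Finset.mul_sum]
    rw [h1, sum_Icc_swap (fun k r => γ k * (G r * m (r - k) / (Nat.factorial (r - k) : ℝ))) 2 K]
    refine Finset.sum_congr rfl fun r hr => ?_
    rw [Finset.mem_Icc] at hr
    have h2 : ∑ k ∈ Finset.Icc 2 r, γ k * (G r * m (r - k) / (Nat.factorial (r - k) : ℝ))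
        = G r * ∑ k ∈ Finset.Icc 2 r, m (r - k) / (Nat.factorial (r - k) : ℝ) * γ k := by
      rw [Finset.mul_sum]
      exact Finset.sum_congr rfl fun k _ => by ring
    rw [h2, gammaCoef_identity m hm0 hm1 r hr.1]
    ring
  -- put it together
  have hmain : (∫ ω, correctedFun g K γ (Xs ω + ε ω) ∂μ) - (∫ ω, g (Xs ω) ∂μ)
      = (∫ ω, R 0 ω ∂μ) - ∑ k ∈ Finset.Icc 2 K, γ k * ∫ ω, R k ω ∂μ := by
    have hGXs : (∫ ω, g (Xs ω) ∂μ) = G 0 := by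
      rw [hGdef]
      simp [iteratedDeriv_zero]
    rw [hLHS, hg0, hGXs]
    have h3 : ∑ k ∈ Finset.Icc 2 K, γ k * ∫ ω, iteratedDeriv k g (Xs ω + ε ω) ∂μ
        = ∑ k ∈ Finset.Icc 2 K, γ k * T k
          + ∑ k ∈ Finset.Icc 2 K, γ k * ∫ ω, R k ω ∂μ := by
      rw [← Finset.sum_add_distrib]
      refine Finset.sum_congr rfl fun k hk => ?_
      rw [Finset.mem_Icc] at hk
      rw [hIR k hk.2]
      ring
    rw [h3, hswap, hT0]
    ring
  rw [hmain]
  -- final bound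
  have hterm : ∀ k ∈ Finset.Icc 2 K,
      |γ k * ∫ ω, R k ω ∂μ| ≤ D k * c * (b₁ * A + b₂ * B) := by
    intro k hk
    rw [Finset.mem_Icc] at hk
    rw [abs_mul]
    have h1 := hγbound k hk.2
    have h2 := hIRbound k hk.2
    have h3 : b₁ * (∫ ω, |ε ω| ^ (K - k + 1) ∂μ) + b₂ * (∫ ω, |ε ω| ^ (M - k) ∂μ)
        ≤ b₁ * (c * σ ^ (K - k + 1)) + b₂ * (c * σ ^ (M - k)) := by
      gcongr
      · exact hmom (K - k + 1) (by omega)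
      · exact hmom (M - k) (by omega)
    have h4 : |γ k| * |∫ ω, R k ω ∂μ|
        ≤ (D k * σ ^ k) * (b₁ * (c * σ ^ (K - k + 1)) + b₂ * (c * σ ^ (M - k))) := by
      refine mul_le_mul h1 (h2.trans h3) (abs_nonneg _) ?_
      exact mul_nonneg (hD0 k) (by positivity)
    have h5 : (D k * σ ^ k) * (b₁ * (c * σ ^ (K - k + 1)) + b₂ * (c * σ ^ (M - k)))
        = D k * c * (b₁ * σ ^ (K + 1) + b₂ * σ ^ M) := by
      rw [show σ ^ (K + 1) = σ ^ k * σ ^ (K - k + 1) by rw [← pow_add]; congr 1; omega,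
        show σ ^ M = σ ^ k * σ ^ (M - k) by rw [← pow_add]; congr 1; omega]
      ring
    have h6 : D k * c * (b₁ * σ ^ (K + 1) + b₂ * σ ^ M)
        ≤ D k * c * (b₁ * A + b₂ * B) := by
      have := hD0 k
      gcongr
    calc |γ k| * |∫ ω, R k ω ∂μ| ≤ _ := h4
      _ = _ := h5
      _ ≤ _ := h6
  have hR0 : |∫ ω, R 0 ω ∂μ| ≤ b₁ * A + b₂ * B := by
    have := hIRbound 0 (by omega)
    simpa [hA, hB, show K - 0 + 1 = K + 1 by omega, show M - 0 = M by omega] using this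
  calc |(∫ ω, R 0 ω ∂μ) - ∑ k ∈ Finset.Icc 2 K, γ k * ∫ ω, R k ω ∂μ|
      ≤ |∫ ω, R 0 ω ∂μ| + |∑ k ∈ Finset.Icc 2 K, γ k * ∫ ω, R k ω ∂μ| := abs_sub _ _
    _ ≤ (b₁ * A + b₂ * B) + ∑ k ∈ Finset.Icc 2 K, D k * c * (b₁ * A + b₂ * B) :=
        add_le_add hR0 ((Finset.abs_sum_le_sum_abs _ _).trans (Finset.sum_le_sum hterm))
    _ = (1 + c * ∑ k ∈ Finset.Icc 2 K, D k) * (b₁ * A + b₂ * B) := by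
        rw [← Finset.sum_mul, ← Finset.sum_mul]
        ring
    _ ≤ (b₁ + b₂) * (1 + c * ∑ k ∈ Finset.Icc 2 K, D k) * (A + B) := by
        have hS : 0 ≤ ∑ k ∈ Finset.Icc 2 K, D k := Finset.sum_nonneg fun k _ => hD0 k
        nlinarith [mul_nonneg hA0 hb₂, mul_nonneg hB0 hb₁,
          mul_nonneg (mul_nonneg hc0 hS) (mul_nonneg hb₂ hA0),
          mul_nonneg (mul_nonneg hc0 hS) (mul_nonneg hb₁ hB0)]
end

section
/- Let ε have E[ε] = 0, E[ε²] = σ² > 0 and suppose E[|ε/σ|^m] ≤ C for all m ≤ K. Then the recursively defined coefficients satisfy |γₖ| ≤ Cₖ·σᵏ for each 2 ≤ k ≤ K, where Cₖ depends only on k and C. -/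
open MeasureTheory ProbabilityTheory
open scoped BigOperators

noncomputable def Dcoef (C : ℝ) : ℕ → ℝ
  | 0 => 0
  | 1 => 0
  | 2 => C / 2
  | 3 => C / 6
  | k + 4 =>
      C / (Nat.factorial (k + 4) : ℝ) +
        ∑ ℓ ∈ (Finset.Icc 2 (k + 2)).attach,
          C / (Nat.factorial (k + 4 - ℓ.1) : ℝ) * Dcoef C ℓ.1
  termination_by k => k
  decreasing_by
    have := (Finset.mem_Icc.mp ℓ.2).2
    omega

theorem gammaCoef_order_sigma_k
    (K : ℕ) (hK : 2 ≤ K) (C : ℝ)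
    {Ω : Type} [MeasurableSpace Ω] (μ : Measure Ω) [IsProbabilityMeasure μ] :
    ∃ D : ℕ → ℝ, ∀ (ε : Ω → ℝ) (σ : ℝ), 0 < σ →
      (∫ ω, ε ω ∂μ) = 0 → (∫ ω, ε ω ^ 2 ∂μ) = σ ^ 2 →
      (∀ m ≤ K, Integrable (fun ω => ε ω ^ m) μ) →
      (∀ m ≤ K, Integrable (fun ω => |ε ω / σ| ^ m) μ) →
      (∀ m ≤ K, (∫ ω, |ε ω / σ| ^ m ∂μ) ≤ C) →
      ∀ k, 2 ≤ k → k ≤ K →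
        |gammaCoef (fun j => ∫ ω, ε ω ^ j ∂μ) k| ≤ D k * σ ^ k := by
  refine ⟨Dcoef C, ?_⟩
  intro ε σ hσ _ _ hint hint' hC
  -- C ≥ 1
  have hC1 : (1:ℝ) ≤ C := by
    have := hC 0 (by omega)
    simpa using this
  have hC0 : (0:ℝ) ≤ C := le_trans zero_le_one hC1
  -- moment bound
  have hm : ∀ j ≤ K, |∫ ω, ε ω ^ j ∂μ| ≤ C * σ ^ j := by
    intro j hj
    have h1 : |∫ ω, ε ω ^ j ∂μ| ≤ ∫ ω, |ε ω ^ j| ∂μ := by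
      simpa [Real.norm_eq_abs] using
        norm_integral_le_integral_norm (fun ω => ε ω ^ j) (μ := μ)
    have h2 : ∀ ω, |ε ω ^ j| = σ ^ j * |ε ω / σ| ^ j := by
      intro ω
      rw [abs_pow, abs_div, abs_of_pos hσ, div_pow, mul_div_cancel₀]
      positivity
    calc |∫ ω, ε ω ^ j ∂μ| ≤ ∫ ω, |ε ω ^ j| ∂μ := h1
      _ = σ ^ j * ∫ ω, |ε ω / σ| ^ j ∂μ := by
          simp_rw [h2]; rw [integral_const_mul]
      _ ≤ σ ^ j * C := by
          exact mul_le_mul_of_nonneg_left (hC j hj) (by positivity)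
      _ = C * σ ^ j := mul_comm _ _
  -- strong induction
  intro k
  induction k using Nat.strong_induction_on with
  | _ k ih =>
    intro hk2 hkK
    match k, hk2, hkK with
    | 2, _, h =>
      rw [gammaCoef, Dcoef]
      rw [abs_div, abs_two, div_mul_eq_mul_div, div_le_div_iff_of_pos_right two_pos]
      exact hm 2 h
    | 3, _, h =>
      rw [gammaCoef, Dcoef]
      have : |(6:ℝ)| = 6 := by norm_num
      rw [abs_div, this, div_mul_eq_mul_div, div_le_div_iff_of_pos_right (by norm_num : (0:ℝ) < 6)]
      exact hm 3 h
    | (j+4), _, h =>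
      rw [gammaCoef, Dcoef]
      have hfac : (0:ℝ) < (Nat.factorial (j+4) : ℝ) := by positivity
      have hterm : ∀ ℓ ∈ (Finset.Icc 2 (j + 2)).attach,
          |(∫ ω, ε ω ^ (j + 4 - ℓ.1) ∂μ) / (Nat.factorial (j + 4 - ℓ.1) : ℝ) *
            gammaCoef (fun j => ∫ ω, ε ω ^ j ∂μ) ℓ.1|
          ≤ (C / (Nat.factorial (j + 4 - ℓ.1) : ℝ) * Dcoef C ℓ.1) * σ ^ (j+4) := by
        intro ℓ _
        obtain ⟨hℓ2, hℓj⟩ := Finset.mem_Icc.mp ℓ.2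
        have hℓK : ℓ.1 ≤ K := by omega
        have haK : j + 4 - ℓ.1 ≤ K := by omega
        have hIH : |gammaCoef (fun j => ∫ ω, ε ω ^ j ∂μ) ℓ.1| ≤ Dcoef C ℓ.1 * σ ^ ℓ.1 :=
          ih ℓ.1 (by omega) hℓ2 hℓK
        have hfa : (0:ℝ) < (Nat.factorial (j + 4 - ℓ.1) : ℝ) := by positivity
        have hmb : |(∫ ω, ε ω ^ (j + 4 - ℓ.1) ∂μ) / (Nat.factorial (j + 4 - ℓ.1) : ℝ)|
            ≤ C * σ ^ (j + 4 - ℓ.1) / (Nat.factorial (j + 4 - ℓ.1) : ℝ) := by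
          rw [abs_div, abs_of_pos hfa]
          gcongr
          exact hm _ haK
        calc |(∫ ω, ε ω ^ (j + 4 - ℓ.1) ∂μ) / (Nat.factorial (j + 4 - ℓ.1) : ℝ) *
              gammaCoef (fun j => ∫ ω, ε ω ^ j ∂μ) ℓ.1|
            = |(∫ ω, ε ω ^ (j + 4 - ℓ.1) ∂μ) / (Nat.factorial (j + 4 - ℓ.1) : ℝ)| *
              |gammaCoef (fun j => ∫ ω, ε ω ^ j ∂μ) ℓ.1| := abs_mul _ _
          _ ≤ (C * σ ^ (j + 4 - ℓ.1) / (Nat.factorial (j + 4 - ℓ.1) : ℝ)) *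
              (Dcoef C ℓ.1 * σ ^ ℓ.1) :=
              mul_le_mul hmb hIH (abs_nonneg _) (by positivity)
          _ = (C / (Nat.factorial (j + 4 - ℓ.1) : ℝ) * Dcoef C ℓ.1) *
              (σ ^ (j + 4 - ℓ.1) * σ ^ ℓ.1) := by ring
          _ = (C / (Nat.factorial (j + 4 - ℓ.1) : ℝ) * Dcoef C ℓ.1) * σ ^ (j+4) := by
              rw [pow_sub_mul_pow σ (by omega : ℓ.1 ≤ j + 4)]
      calc |(∫ ω, ε ω ^ (j+4) ∂μ) / (Nat.factorial (j+4) : ℝ) -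
            ∑ ℓ ∈ (Finset.Icc 2 (j + 2)).attach,
              (∫ ω, ε ω ^ (j + 4 - ℓ.1) ∂μ) / (Nat.factorial (j + 4 - ℓ.1) : ℝ) *
                gammaCoef (fun j => ∫ ω, ε ω ^ j ∂μ) ℓ.1|
          ≤ |(∫ ω, ε ω ^ (j+4) ∂μ) / (Nat.factorial (j+4) : ℝ)| +
            |∑ ℓ ∈ (Finset.Icc 2 (j + 2)).attach,
              (∫ ω, ε ω ^ (j + 4 - ℓ.1) ∂μ) / (Nat.factorial (j + 4 - ℓ.1) : ℝ) *
                gammaCoef (fun j => ∫ ω, ε ω ^ j ∂μ) ℓ.1| := abs_sub _ _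
        _ ≤ C * σ ^ (j+4) / (Nat.factorial (j+4) : ℝ) +
            ∑ ℓ ∈ (Finset.Icc 2 (j + 2)).attach,
              (C / (Nat.factorial (j + 4 - ℓ.1) : ℝ) * Dcoef C ℓ.1) * σ ^ (j+4) := by
            gcongr
            · rw [abs_div, abs_of_pos hfac]
              gcongr
              exact hm _ h
            · exact (Finset.abs_sum_le_sum_abs _ _).trans (Finset.sum_le_sum hterm)
        _ = (C / (Nat.factorial (j+4) : ℝ) +
            ∑ ℓ ∈ (Finset.Icc 2 (j + 2)).attach,
              C / (Nat.factorial (j + 4 - ℓ.1) : ℝ) * Dcoef C ℓ.1) * σ ^ (j+4) := by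
            rw [← Finset.sum_mul]; ring
end
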